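/- Let 𝓜 = (m_j)_{j∈ℕ₀} be a weight sequence, let k ≥ 1, and let γ = (γ_1,…,γ_k) ∈ Δ(k), where Δ(k) = { γ ∈ ℕ₀^k : Σ_{ℓ=1}^{k} ℓ·γ_ℓ = k } and |γ| = γ_1 + ⋯ + γ_k. Then m_{|γ|}·m_1^{γ_1}·m_2^{γ_2}·⋯·m_k^{γ_k} ≤ m_k. -/

import Mathlib

open scoped BigOperators

/-- A weight sequence in the sense of Denjoy–Carleman classes. -/
structure IsWeightSeq (m : ℕ → ℝ) : Prop where
  pos : ∀ j, 0 < m j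
  m_zero : m 0 = 1
  m_one : m 1 = 1
  logconvex : ∀ j : ℕ, 1 ≤ j → m j ^ 2 ≤ m (j - 1) * m (j + 1)
  bound : ∃ H : ℝ, 1 ≤ H ∧ ∀ j k : ℕ, 1 ≤ j + k →
    (m (j + k) / (m j * m k)) ^ ((1 : ℝ) / ((j + k : ℕ) : ℝ)) ≤ H

namespace WeightSeqAux

variable {m : ℕ → ℝ}

lemma ratio_mono (hm : IsWeightSeq m) : Monotone (fun j => m (j + 1) / m j) := by
  apply monotone_nat_of_le_succ
  intro j
  have h := hm.logconvex (j + 1) (by omega)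
  simp only [Nat.add_sub_cancel] at h
  rw [div_le_div_iff₀ (hm.pos j) (hm.pos (j + 1))]
  nlinarith [hm.pos j, hm.pos (j + 1), hm.pos (j + 2)]

lemma step (hm : IsWeightSeq m) {c d : ℕ} (h : c ≤ d) :
    m (c + 1) * m d ≤ m c * m (d + 1) := by
  have := ratio_mono hm h
  rw [div_le_div_iff₀ (hm.pos c) (hm.pos d)] at this
  linarith

lemma cross (hm : IsWeightSeq m) (t : ℕ) : ∀ a b : ℕ, a ≤ b →
    m (a + t) * m b ≤ m a * m (b + t) := by
  induction t with
  | zero => intro a b _; ring_nf; exact le_refl _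
  | succ t ih =>
    intro a b hab
    have h1 := ih a b hab
    have h2 := step hm (show a + t ≤ b + t by omega)
    have p1 := hm.pos (a + t)
    have p2 := hm.pos (b + t)
    have p3 := hm.pos a
    have p4 := hm.pos b
    have p5 := hm.pos (a + t + 1)
    have p6 := hm.pos (b + t + 1)
    have key : (m (a + t + 1) * m b) * (m (a + t) * m (b + t)) ≤
        (m a * m (b + t + 1)) * (m (a + t) * m (b + t)) := by
      nlinarith [mul_le_mul h2 h1 (by positivity) (by positivity)]
    exact le_of_mul_le_mul_right key (by positivity)

lemma len_le_sum : ∀ L : List ℕ, (∀ x ∈ L, 1 ≤ x) → L.length ≤ L.sum := by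
  intro L
  induction L with
  | nil => simp
  | cons a L ih =>
    intro h
    simp only [List.length_cons, List.sum_cons]
    have := ih (fun x hx => h x (List.mem_cons_of_mem _ hx))
    have := h a List.mem_cons_self
    omega

lemma main_list (hm : IsWeightSeq m) : ∀ L : List ℕ, (∀ x ∈ L, 1 ≤ x) →
    m L.length * (L.map m).prod ≤ m L.sum := by
  intro L
  induction L with
  | nil => simp [hm.m_zero]
  | cons ℓ L ih =>
    intro h
    have hL : ∀ x ∈ L, 1 ≤ x := fun x hx => h x (List.mem_cons_of_mem _ hx)
    have hℓ : 1 ≤ ℓ := h ℓ List.mem_cons_self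
    obtain ⟨ℓ', rfl⟩ : ∃ ℓ', ℓ = ℓ' + 1 := ⟨ℓ - 1, by omega⟩
    have IH := ih hL
    have hls := len_le_sum L hL
    -- m (len + 1) * m (ℓ'+1) ≤ m (len + ℓ'+1)
    have h1 : m (ℓ' + 1) * m (L.length + 1) ≤ m (L.length + (ℓ' + 1)) := by
      have := cross hm ℓ' 1 (L.length + 1) (by omega)
      rw [hm.m_one] at this
      calc m (ℓ' + 1) * m (L.length + 1) = m (1 + ℓ') * m (L.length + 1) := by ring_nf
        _ ≤ 1 * m (L.length + 1 + ℓ') := this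
        _ = m (L.length + (ℓ' + 1)) := by ring_nf
    have h2 : m (L.length + (ℓ' + 1)) * m L.sum ≤ m L.length * m (L.sum + (ℓ' + 1)) :=
      cross hm (ℓ' + 1) L.length L.sum hls
    simp only [List.length_cons, List.sum_cons, List.map_cons, List.prod_cons]
    have pP : 0 < (L.map m).prod := by
      apply List.prod_pos
      intro x hx
      obtain ⟨y, _, rfl⟩ := List.mem_map.mp hx
      exact hm.pos y
    have pA := hm.pos (L.length + (ℓ' + 1))
    have pB := hm.pos L.length
    have pC := hm.pos L.sum
    have pD := hm.pos (L.sum + (ℓ' + 1))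
    have step1 : m (L.length + 1) * (m (ℓ' + 1) * (L.map m).prod) ≤
        m (L.length + (ℓ' + 1)) * (L.map m).prod := by
      nlinarith
    have step2 : m (L.length + (ℓ' + 1)) * (L.map m).prod ≤ m (L.sum + (ℓ' + 1)) := by
      have key : (m (L.length + (ℓ' + 1)) * (L.map m).prod) * (m L.length * m L.sum) ≤
          m (L.sum + (ℓ' + 1)) * (m L.length * m L.sum) := by
        nlinarith [mul_le_mul h2 IH (by positivity) (by positivity)]
      exact le_of_mul_le_mul_right key (by positivity)
    calc m (L.length + 1) * (m (ℓ' + 1) * (L.map m).prod)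
        ≤ m (L.length + (ℓ' + 1)) * (L.map m).prod := step1
      _ ≤ m (L.sum + (ℓ' + 1)) := step2
      _ = m (ℓ' + 1 + L.sum) := by ring_nf

end WeightSeqAux

/-- If `γ ∈ Δ(k)`, i.e. `Σ_{ℓ=1}^k ℓ·γ_ℓ = k` (indexing
`γ_ℓ = γ ⟨ℓ-1⟩` over `Fin k`), then `m_{|γ|}·m_1^{γ_1}⋯m_k^{γ_k} ≤ m_k`. -/
theorem weight_seq_prod_le (m : ℕ → ℝ) (hm : IsWeightSeq m) (k : ℕ) (hk : 1 ≤ k)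
    (γ : Fin k → ℕ) (hγ : ∑ i : Fin k, (i.1 + 1) * γ i = k) :
    m (∑ i : Fin k, γ i) * ∏ i : Fin k, m (i.1 + 1) ^ γ i ≤ m k := by
  classical
  set L : List ℕ := (List.finRange k).flatMap (fun i => List.replicate (γ i) (i.1 + 1)) with hLdef
  have hmem : ∀ x ∈ L, 1 ≤ x := by
    intro x hx
    simp only [hLdef, List.mem_flatMap, List.mem_replicate] at hx
    obtain ⟨i, _, _, rfl⟩ := hx
    omega
  have hlen : L.length = ∑ i : Fin k, γ i := by
    simp [hLdef, List.length_flatMap, Fin.sum_univ_def, Function.comp_def]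
  have hsum : L.sum = k := by
    rw [← hγ]
    simp [hLdef, List.flatMap, List.sum_flatten, List.map_map, Fin.sum_univ_def,
      Function.comp_def, List.sum_replicate, smul_eq_mul, mul_comm]
  have hprod : (L.map m).prod = ∏ i : Fin k, m (i.1 + 1) ^ γ i := by
    simp [hLdef, List.map_flatMap, List.flatMap, List.prod_flatten, List.map_map,
      Fin.prod_univ_def, Function.comp_def, List.prod_replicate]
  have := WeightSeqAux.main_list hm L hmem
  rw [hlen, hsum, hprod] at this
  exact this
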